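/- Let ε ∈ {1, −1} ⊆ ℂ and let s ∈ ℂ satisfy s² = 2ε. Define 4×4 complex matrices, with rows and columns indexed by 0,1,2,3 and E_{ij} denoting the matrix unit with a 1 in row i and column j: ρH := s·E₀₀, ρQ₁ := E₂₃ + E₃₂, ρQ₂ := E₃₁ + ε·E₁₃, ρQ₃ := E₂₁ + ε·E₁₂. Then these matrices satisfy the A1_ε relations: ρH·ρQ_k = ρQ_k·ρH for k = 1,2,3, ρQ₁·ρQ₂ + ρQ₂·ρQ₁ = ρQ₃, ρQ₂·ρQ₃ + ρQ₃·ρQ₂ = ε·ρQ₁, and ρQ₃·ρQ₁ + ρQ₁·ρQ₃ = ρQ₂. -/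

import Mathlib

open Matrix

/-- **The four-dimensional representation of `A1_ε` satisfies the `A1_ε`
relations.**  With `ρH = s·E₀₀`, `ρQ₁ = E₂₃ + E₃₂`, `ρQ₂ = E₃₁ + ε·E₁₃`,
`ρQ₃ = E₂₁ + ε·E₁₂` (`s² = 2ε`, `ε = ±1`), one has `[ρH, ρQ_k] = 0`,
`{ρQ₁,ρQ₂} = ρQ₃`, `{ρQ₂,ρQ₃} = ε·ρQ₁`, `{ρQ₃,ρQ₁} = ρQ₂`. -/
theorem A1eps_four_dim_rep
    (ε : ℂ) (hε : ε = 1 ∨ ε = -1)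
    (s : ℂ) (hs : s ^ 2 = 2 * ε) :
    let ρH : Matrix (Fin 4) (Fin 4) ℂ := s • single 0 0 1
    let ρQ1 : Matrix (Fin 4) (Fin 4) ℂ := single 2 3 1 + single 3 2 1
    let ρQ2 : Matrix (Fin 4) (Fin 4) ℂ := single 3 1 1 + ε • single 1 3 1
    let ρQ3 : Matrix (Fin 4) (Fin 4) ℂ := single 2 1 1 + ε • single 1 2 1
    ρH * ρQ1 = ρQ1 * ρH ∧
    ρH * ρQ2 = ρQ2 * ρH ∧
    ρH * ρQ3 = ρQ3 * ρH ∧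
    ρQ1 * ρQ2 + ρQ2 * ρQ1 = ρQ3 ∧
    ρQ2 * ρQ3 + ρQ3 * ρQ2 = ε • ρQ1 ∧
    ρQ3 * ρQ1 + ρQ1 * ρQ3 = ρQ2 := by
  intro ρH ρQ1 ρQ2 ρQ3
  have key : ∀ (i j k l : Fin 4) (a b : ℂ),
      single i j a * single k l b =
        if j = k then single i l (a * b) else 0 := by
    intro i j k l a b
    rcases eq_or_ne j k with h | h
    · subst h; simp [single_mul_single_same]
    · simp [Matrix.single_mul_single_of_ne _ _ _ _ h, h]
  refine ⟨?_, ?_, ?_, ?_, ?_, ?_⟩ <;>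
  · simp only [ρH, ρQ1, ρQ2, ρQ3, mul_add, add_mul, smul_mul_assoc,
      mul_smul_comm, key]
    have hε2 : ε * ε = 1 := by rcases hε with h | h <;> simp [h]
    simp [hε2, smul_smul]
    try abel
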